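/- For every κ with 0 < κ < 1 and every s ∈ (0,1), the inequality (1/(s(1−s)))·(s^{1/(κ−1)} + (1−s)^{1/(κ−1)})^{κ−1} ≤ 2^κ holds, with equality if and only if s = 1/2. -/

import Mathlib

open Set

/-- Inequality (18.9) of the paper: for `0 < κ < 1` and `s ∈ (0,1)`,
`(1/(s(1-s))) ⬝ (s^{1/(κ-1)} + (1-s)^{1/(κ-1)})^{κ-1} ≤ 2^κ`,
with equality if and only if `s = 1/2`. -/
theorem stmt4 (κ s : ℝ) (hκ0 : 0 < κ) (hκ1 : κ < 1) (hs : s ∈ Ioo (0 : ℝ) 1) :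
    1 / (s * (1 - s)) * (s ^ (1 / (κ - 1)) + (1 - s) ^ (1 / (κ - 1))) ^ (κ - 1) ≤ 2 ^ κ ∧
    (1 / (s * (1 - s)) * (s ^ (1 / (κ - 1)) + (1 - s) ^ (1 / (κ - 1))) ^ (κ - 1) = 2 ^ κ ↔
      s = 1 / 2) := by
  obtain ⟨hs0, hs1⟩ := hs
  set t := 1 - s with ht
  have ht0 : 0 < t := by simp [ht]; linarith
  have hst : 0 < s * t := mul_pos hs0 ht0
  have hκ1' : κ - 1 < 0 := by linarith
  set r : ℝ := 1 / (1 - κ) with hr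
  have hr1 : 1 < r := by
    rw [hr, lt_div_iff₀ (by linarith)]; linarith
  have hr0 : 0 < r := by linarith
  have hκne : κ - 1 ≠ 0 := by linarith
  have hκne' : (1:ℝ) - κ ≠ 0 := by linarith
  have hqr : 1 / (κ - 1) = -r := by
    rw [hr]; field_simp; ring
  have hrκ : r * (κ - 1) = -1 := by
    rw [hr]; field_simp; ring
  -- simplify LHS to (s^r + t^r)^(κ-1)
  set B : ℝ := s ^ r + t ^ r with hB
  have hBpos : 0 < B := by positivity
  have key : 1 / (s * t) * (s ^ (1 / (κ - 1)) + t ^ (1 / (κ - 1))) ^ (κ - 1)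
      = B ^ (κ - 1) := by
    have hA : s ^ (1 / (κ - 1)) + t ^ (1 / (κ - 1)) = B * (s * t) ^ (-r) := by
      rw [hqr, hB, Real.mul_rpow hs0.le ht0.le, Real.rpow_neg hs0.le,
        Real.rpow_neg ht0.le]
      have h1 := (Real.rpow_pos_of_pos hs0 r).ne'
      have h2 := (Real.rpow_pos_of_pos ht0 r).ne'
      field_simp
      ring
    rw [hA, Real.mul_rpow hBpos.le (by positivity), ← Real.rpow_mul hst.le,
      show -r * (κ - 1) = 1 by linarith [hrκ], Real.rpow_one]
    field_simp
  -- convexity: B ≥ 2^(1-r), strict unless s = 1/2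
  have hhalf : (1/2 : ℝ) ^ r + (1/2 : ℝ) ^ r = 2 ^ (1 - r) := by
    rw [Real.rpow_sub (by norm_num), Real.rpow_one,
      show (1/2 : ℝ) = 2⁻¹ by norm_num, Real.inv_rpow (by norm_num)]
    field_simp
    ring
  have hBlow : 2 ^ (1 - r) ≤ B := by
    have hc := (strictConvexOn_rpow hr1).convexOn.2 (mem_Ici.2 hs0.le)
      (mem_Ici.2 ht0.le) (by norm_num : (0:ℝ) ≤ 1/2) (by norm_num : (0:ℝ) ≤ 1/2)
      (by norm_num)
    simp only [smul_eq_mul] at hc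
    have h2 : (1/2 : ℝ) * s + 1/2 * t = 1/2 := by rw [ht]; ring
    rw [h2] at hc
    have := hhalf
    nlinarith [hc, Real.rpow_nonneg (le_of_lt hs0) r]
  have hBstrict : s ≠ 1/2 → 2 ^ (1 - r) < B := by
    intro hne
    have hst' : s ≠ t := by rw [ht]; intro h; apply hne; linarith
    have hc := (strictConvexOn_rpow hr1).2 (mem_Ici.2 hs0.le)
      (mem_Ici.2 ht0.le) hst' (by norm_num : (0:ℝ) < 1/2) (by norm_num : (0:ℝ) < 1/2)
      (by norm_num)
    simp only [smul_eq_mul] at hc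
    have h2 : (1/2 : ℝ) * s + 1/2 * t = 1/2 := by rw [ht]; ring
    rw [h2] at hc
    nlinarith [hc, hhalf]
  have hexp : (1 - r) * (κ - 1) = κ := by nlinarith [hrκ]
  rw [key]
  constructor
  · calc B ^ (κ - 1) ≤ (2 ^ (1 - r) : ℝ) ^ (κ - 1) := by
          rw [Real.rpow_le_rpow_iff_of_neg hBpos (by positivity) hκ1']
          exact hBlow
      _ = 2 ^ κ := by rw [← Real.rpow_mul (by norm_num), hexp]
  · constructor
    · intro heq
      by_contra hne
      have h1 := hBstrict hne
      have h2 : B ^ (κ - 1) < (2 ^ (1 - r) : ℝ) ^ (κ - 1) :=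
        Real.rpow_lt_rpow_of_neg (by positivity) h1 hκ1'
      rw [← Real.rpow_mul (by norm_num), hexp] at h2
      linarith [heq ▸ h2]
    · intro hhalf'
      have hts : t = 1/2 := by rw [ht, hhalf']; norm_num
      rw [hB, hhalf', hts, hhalf, ← Real.rpow_mul (by norm_num), hexp]
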